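/- Let K = {(x,0) : x > 0} ∪ {(0,y) : y > 0} ⊆ ℝ² and J = {(x,y) : x > 0, y > 0}. For all A, B ∈ J, the function g_{AB} : K → ℝ given by g_{AB}(M) = ‖MA‖/‖MB‖ (Euclidean distances) attains both a maximum and a minimum on K. Consequently d^B(A,B) = ln( max_{M∈K} g_{AB}(M) / min_{M∈K} g_{AB}(M) ) defines a Barbilian distance on J. -/

import Mathlib

/-- The union of the positive coordinate half-axes in the plane. -/
def barbilianQuadrantK : Set (EuclideanSpace ℝ (Fin 2)) :=
  {p | (p 1 = 0 ∧ 0 < p 0) ∨ (p 0 = 0 ∧ 0 < p 1)}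

/-- The open first quadrant in the plane. -/
def barbilianQuadrantJ : Set (EuclideanSpace ℝ (Fin 2)) :=
  {p | 0 < p 0 ∧ 0 < p 1}

/-- Barbilian distance on the open first quadrant, with `K` the union of the positive
half-axes and influence `f(M,A) = ‖MA‖`. -/
noncomputable def barbilianQuadrantD (A B : EuclideanSpace ℝ (Fin 2)) : ℝ :=
  Real.log (sSup ((fun M => dist M A / dist M B) '' barbilianQuadrantK) /
    sInf ((fun M => dist M A / dist M B) '' barbilianQuadrantK))


noncomputable section BarbilianAux

open Real Metric Set

/-- convenient constructor for points of the plane -/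
def bqPt (x y : ℝ) : EuclideanSpace ℝ (Fin 2) := (WithLp.equiv 2 (Fin 2 → ℝ)).symm ![x, y]

lemma bqPt_zero : (0 : EuclideanSpace ℝ (Fin 2)) = bqPt 0 0 := by
  ext i; fin_cases i <;> rfl

lemma bq_dist_pt (A : EuclideanSpace ℝ (Fin 2)) (x y : ℝ) :
    dist (bqPt x y) A = Real.sqrt ((x - A 0)^2 + (y - A 1)^2) := by
  rw [EuclideanSpace.dist_eq, Fin.sum_univ_two]
  simp [Real.dist_eq, sq_abs, bqPt]

lemma bq_eq_pt (p : EuclideanSpace ℝ (Fin 2)) : p = bqPt (p 0) (p 1) := by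
  ext i; fin_cases i <;> rfl

/-- closure of K : nonnegative half axes -/
def bqKbar : Set (EuclideanSpace ℝ (Fin 2)) :=
  {p | (p 1 = 0 ∧ 0 ≤ p 0) ∨ (p 0 = 0 ∧ 0 ≤ p 1)}

lemma bqK_sub_Kbar : {p : EuclideanSpace ℝ (Fin 2) |
    (p 1 = 0 ∧ 0 < p 0) ∨ (p 0 = 0 ∧ 0 < p 1)} ⊆ bqKbar := by
  rintro p (⟨h1, h2⟩ | ⟨h1, h2⟩)
  · exact Or.inl ⟨h1, h2.le⟩
  · exact Or.inr ⟨h1, h2.le⟩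

lemma bqKbar_closed : IsClosed bqKbar := by
  have hc : ∀ i : Fin 2, Continuous fun p : EuclideanSpace ℝ (Fin 2) => p i :=
    fun i => (EuclideanSpace.proj i).continuous
  have : bqKbar = ({p : EuclideanSpace ℝ (Fin 2) | p 1 = 0} ∩ {p | 0 ≤ p 0}) ∪
      ({p | p 0 = 0} ∩ {p | 0 ≤ p 1}) := rfl
  rw [this]
  exact ((isClosed_eq (hc 1) continuous_const).inter
      (isClosed_le continuous_const (hc 0))).union
    ((isClosed_eq (hc 0) continuous_const).inter (isClosed_le continuous_const (hc 1)))

lemma bq_dist_pos {M P : EuclideanSpace ℝ (Fin 2)} (hM : M ∈ bqKbar)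
    (hP : 0 < P 0 ∧ 0 < P 1) : 0 < dist M P := by
  rw [dist_pos]
  rintro rfl
  rcases hM with ⟨h1, _⟩ | ⟨h1, _⟩
  · exact absurd h1 (ne_of_gt hP.2)
  · exact absurd h1 (ne_of_gt hP.1)

end BarbilianAux
lemma bqPt_app0 (x y : ℝ) : bqPt x y 0 = x := rfl
lemma bqPt_app1 (x y : ℝ) : bqPt x y 1 = y := rfl
open Real Metric Set in
/-- If `A ≠ B`, both in the open quadrant, some point of K is strictly closer to `B`. -/
lemma bq_exists_gt {A B : EuclideanSpace ℝ (Fin 2)}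
    (hA : 0 < A 0 ∧ 0 < A 1) (hB : 0 < B 0 ∧ 0 < B 1) (hne : A ≠ B) :
    ∃ M ∈ {p : EuclideanSpace ℝ (Fin 2) | (p 1 = 0 ∧ 0 < p 0) ∨ (p 0 = 0 ∧ 0 < p 1)},
      dist M B < dist M A := by
  set a1 := A 0 with ha1; set a2 := A 1 with ha2
  set b1 := B 0 with hb1; set b2 := B 1 with hb2
  set c : ℝ := a1^2 + a2^2 - (b1^2 + b2^2) with hc
  by_cases h1 : a1 < b1
  · -- large t on the x-axis
    set t : ℝ := (|c| + 1) / (2*(b1 - a1)) with ht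
    have hden : (0:ℝ) < 2*(b1 - a1) := by linarith
    have htpos : 0 < t := div_pos (by positivity) hden
    refine ⟨bqPt t 0, Or.inl ⟨rfl, htpos⟩, ?_⟩
    rw [bq_dist_pt, bq_dist_pt]
    apply Real.sqrt_lt_sqrt (by positivity)
    have hmul : t * (2*(b1 - a1)) = |c| + 1 := div_mul_cancel₀ _ (ne_of_gt hden)
    nlinarith [neg_abs_le c, hmul]
  · by_cases h2 : a2 < b2
    · -- large t on the y-axis
      set t : ℝ := (|c| + 1) / (2*(b2 - a2)) with ht
      have hden : (0:ℝ) < 2*(b2 - a2) := by linarith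
      have htpos : 0 < t := div_pos (by positivity) hden
      refine ⟨bqPt 0 t, Or.inr ⟨rfl, htpos⟩, ?_⟩
      rw [bq_dist_pt, bq_dist_pt]
      apply Real.sqrt_lt_sqrt (by positivity)
      have hmul : t * (2*(b2 - a2)) = |c| + 1 := div_mul_cancel₀ _ (ne_of_gt hden)
      nlinarith [neg_abs_le c, hmul]
    · -- b1 ≤ a1 and b2 ≤ a2 : then c > 0 (since A ≠ B), take small t on x-axis
      push_neg at h1 h2
      have hcpos : 0 < c := by
        rcases lt_or_eq_of_le h1 with h | h
        · nlinarith [hB.1, hB.2]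
        · have hne2 : a2 ≠ b2 := by
            intro hh
            apply hne
            rw [bq_eq_pt A, bq_eq_pt B, ← ha1, ← ha2, ← hb1, ← hb2, h, hh]
          have : b2 < a2 := lt_of_le_of_ne h2 (Ne.symm hne2)
          nlinarith [hB.1, hB.2]
      set t : ℝ := c / (4*(1 + a1)) with ht
      have hden : (0:ℝ) < 4*(1 + a1) := by nlinarith [hA.1]
      have htpos : 0 < t := div_pos hcpos hden
      refine ⟨bqPt t 0, Or.inl ⟨rfl, htpos⟩, ?_⟩
      rw [bq_dist_pt, bq_dist_pt]
      apply Real.sqrt_lt_sqrt (by positivity)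
      have hmul : t * (4*(1 + a1)) = c := div_mul_cancel₀ _ (ne_of_gt hden)
      nlinarith [mul_pos htpos hA.1, mul_pos htpos hB.1, htpos]
open Real Metric Set in
/-- core scalar inequality used to escape from the origin -/
lemma bq_core {nA nB a b t : ℝ} (hnA : 0 ≤ nA) (hnB : 0 < nB)
    (huA : 0 ≤ nA - 2*t*a + t^2) (huB : 0 < nB - 2*t*b + t^2)
    (h : t^2*(nA - nB) < 2*t*(b*nA - a*nB)) :
    Real.sqrt nA / Real.sqrt nB < Real.sqrt (nA - 2*t*a + t^2) / Real.sqrt (nB - 2*t*b + t^2) := by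
  rw [div_lt_div_iff₀ (Real.sqrt_pos.2 hnB) (Real.sqrt_pos.2 huB), ← Real.sqrt_mul hnA,
    ← Real.sqrt_mul huA]
  apply Real.sqrt_lt_sqrt (by positivity)
  nlinarith

set_option maxHeartbeats 1600000 in
open Real Metric Set in
lemma bq_escape {A B : EuclideanSpace ℝ (Fin 2)}
    (hA : 0 < A 0 ∧ 0 < A 1) (hB : 0 < B 0 ∧ 0 < B 1) {R : ℝ} (hR : 0 < R)
    (hd : dist (0 : EuclideanSpace ℝ (Fin 2)) B < dist (0 : EuclideanSpace ℝ (Fin 2)) A) :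
    ∃ M, ((M 1 = 0 ∧ 0 < M 0) ∨ (M 0 = 0 ∧ 0 < M 1)) ∧ dist M (0 : EuclideanSpace ℝ (Fin 2)) ≤ R ∧
      dist (0 : EuclideanSpace ℝ (Fin 2)) A / dist (0 : EuclideanSpace ℝ (Fin 2)) B
        < dist M A / dist M B := by
  obtain ⟨ha1, ha2⟩ := hA
  obtain ⟨hb1, hb2⟩ := hB
  have hnApos : (0:ℝ) < A 0^2 + A 1^2 := by positivity
  have hnBpos : (0:ℝ) < B 0^2 + B 1^2 := by positivity
  have hd0A : dist (0 : EuclideanSpace ℝ (Fin 2)) A = Real.sqrt (A 0^2 + A 1^2) := by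
    rw [bqPt_zero, bq_dist_pt]; congr 1; ring
  have hd0B : dist (0 : EuclideanSpace ℝ (Fin 2)) B = Real.sqrt (B 0^2 + B 1^2) := by
    rw [bqPt_zero, bq_dist_pt]; congr 1; ring
  have hBA : B 0^2 + B 1^2 < A 0^2 + A 1^2 := by
    rw [hd0A, hd0B] at hd
    nlinarith [Real.sq_sqrt hnApos.le, Real.sq_sqrt hnBpos.le, Real.sqrt_nonneg (A 0^2 + A 1^2),
      Real.sqrt_nonneg (B 0^2 + B 1^2), hd]
  -- find a coordinate with a_i * nB < b_i * nA
  have hcoord : A 0 * (B 0^2 + B 1^2) < B 0 * (A 0^2 + A 1^2) ∨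
      A 1 * (B 0^2 + B 1^2) < B 1 * (A 0^2 + A 1^2) := by
    by_contra hcon
    push_neg at hcon
    obtain ⟨hc1, hc2⟩ := hcon
    have e1 : (B 0 * (A 0^2 + A 1^2))^2 ≤ (A 0 * (B 0^2 + B 1^2))^2 := by
      nlinarith [mul_pos hb1 hnApos]
    have e2 : (B 1 * (A 0^2 + A 1^2))^2 ≤ (A 1 * (B 0^2 + B 1^2))^2 := by
      nlinarith [mul_pos hb2 hnApos]
    nlinarith [e1, e2, mul_pos (mul_pos hnApos hnBpos) (sub_pos.2 hBA)]
  rcases hcoord with hco | hco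
  · obtain ⟨t, htdef⟩ : ∃ x : ℝ, x = min R ((B 0*(A 0^2 + A 1^2) - A 0*(B 0^2 + B 1^2))/((A 0^2 + A 1^2) - (B 0^2 + B 1^2))) := ⟨_, rfl⟩
    have hnum : 0 < B 0*(A 0^2 + A 1^2) - A 0*(B 0^2 + B 1^2) := by linarith
    have htpos : 0 < t := by rw [htdef]; exact lt_min hR (div_pos hnum (by linarith))
    have htR : t ≤ R := by rw [htdef]; exact min_le_left _ _
    have hkey : t^2*((A 0^2 + A 1^2) - (B 0^2 + B 1^2)) <
        2*t*(B 0*(A 0^2 + A 1^2) - A 0*(B 0^2 + B 1^2)) := by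
      have h1 : t * ((A 0^2 + A 1^2) - (B 0^2 + B 1^2)) ≤
          B 0*(A 0^2 + A 1^2) - A 0*(B 0^2 + B 1^2) := by
        have hm : t ≤ (B 0*(A 0^2 + A 1^2) - A 0*(B 0^2 + B 1^2))/((A 0^2 + A 1^2) - (B 0^2 + B 1^2)) := by
          rw [htdef]; exact min_le_right _ _
        calc t * ((A 0^2 + A 1^2) - (B 0^2 + B 1^2))
            ≤ ((B 0*(A 0^2 + A 1^2) - A 0*(B 0^2 + B 1^2))/((A 0^2 + A 1^2) - (B 0^2 + B 1^2)))
              * ((A 0^2 + A 1^2) - (B 0^2 + B 1^2)) :=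
              mul_le_mul_of_nonneg_right hm (by linarith)
          _ = B 0*(A 0^2 + A 1^2) - A 0*(B 0^2 + B 1^2) := div_mul_cancel₀ _ (by linarith)
      have h2 : t * ((A 0^2 + A 1^2) - (B 0^2 + B 1^2)) <
          2*(B 0*(A 0^2 + A 1^2) - A 0*(B 0^2 + B 1^2)) := by linarith
      nlinarith [mul_lt_mul_of_pos_left h2 htpos]
    refine ⟨bqPt t 0, Or.inl ⟨bqPt_app1 t 0, by rw [bqPt_app0]; exact htpos⟩, ?_, ?_⟩
    · rw [bqPt_zero, bq_dist_pt]
      simp only [bqPt_app0, bqPt_app1]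
      rw [show (t - 0)^2 + ((0:ℝ) - 0)^2 = t^2 by ring, Real.sqrt_sq htpos.le]
      exact htR
    · rw [hd0A, hd0B, bq_dist_pt, bq_dist_pt,
        show (t - A 0)^2 + ((0:ℝ) - A 1)^2 = (A 0^2 + A 1^2) - 2*t*(A 0) + t^2 by ring,
        show (t - B 0)^2 + ((0:ℝ) - B 1)^2 = (B 0^2 + B 1^2) - 2*t*(B 0) + t^2 by ring]
      exact bq_core hnApos.le hnBpos (by nlinarith [sq_nonneg (t - A 0), sq_nonneg (A 1)])
        (by nlinarith [sq_nonneg (t - B 0), hb2]) hkey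
  · obtain ⟨t, htdef⟩ : ∃ x : ℝ, x = min R ((B 1*(A 0^2 + A 1^2) - A 1*(B 0^2 + B 1^2))/((A 0^2 + A 1^2) - (B 0^2 + B 1^2))) := ⟨_, rfl⟩
    have hnum : 0 < B 1*(A 0^2 + A 1^2) - A 1*(B 0^2 + B 1^2) := by linarith
    have htpos : 0 < t := by rw [htdef]; exact lt_min hR (div_pos hnum (by linarith))
    have htR : t ≤ R := by rw [htdef]; exact min_le_left _ _
    have hkey : t^2*((A 0^2 + A 1^2) - (B 0^2 + B 1^2)) <
        2*t*(B 1*(A 0^2 + A 1^2) - A 1*(B 0^2 + B 1^2)) := by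
      have h1 : t * ((A 0^2 + A 1^2) - (B 0^2 + B 1^2)) ≤
          B 1*(A 0^2 + A 1^2) - A 1*(B 0^2 + B 1^2) := by
        have hm : t ≤ (B 1*(A 0^2 + A 1^2) - A 1*(B 0^2 + B 1^2))/((A 0^2 + A 1^2) - (B 0^2 + B 1^2)) := by
          rw [htdef]; exact min_le_right _ _
        calc t * ((A 0^2 + A 1^2) - (B 0^2 + B 1^2))
            ≤ ((B 1*(A 0^2 + A 1^2) - A 1*(B 0^2 + B 1^2))/((A 0^2 + A 1^2) - (B 0^2 + B 1^2)))
              * ((A 0^2 + A 1^2) - (B 0^2 + B 1^2)) :=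
              mul_le_mul_of_nonneg_right hm (by linarith)
          _ = B 1*(A 0^2 + A 1^2) - A 1*(B 0^2 + B 1^2) := div_mul_cancel₀ _ (by linarith)
      have h2 : t * ((A 0^2 + A 1^2) - (B 0^2 + B 1^2)) <
          2*(B 1*(A 0^2 + A 1^2) - A 1*(B 0^2 + B 1^2)) := by linarith
      nlinarith [mul_lt_mul_of_pos_left h2 htpos]
    refine ⟨bqPt 0 t, Or.inr ⟨bqPt_app0 0 t, by rw [bqPt_app1]; exact htpos⟩, ?_, ?_⟩
    · rw [bqPt_zero, bq_dist_pt]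
      simp only [bqPt_app0, bqPt_app1]
      rw [show ((0:ℝ) - 0)^2 + (t - 0)^2 = t^2 by ring, Real.sqrt_sq htpos.le]
      exact htR
    · rw [hd0A, hd0B, bq_dist_pt, bq_dist_pt,
        show ((0:ℝ) - A 0)^2 + (t - A 1)^2 = (A 0^2 + A 1^2) - 2*t*(A 1) + t^2 by ring,
        show ((0:ℝ) - B 0)^2 + (t - B 1)^2 = (B 0^2 + B 1^2) - 2*t*(B 1) + t^2 by ring]
      exact bq_core hnApos.le hnBpos (by nlinarith [sq_nonneg (t - A 1), sq_nonneg (A 0)])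
        (by nlinarith [sq_nonneg (t - B 1), hb1]) hkey
lemma bqK_mem_iff (p : EuclideanSpace ℝ (Fin 2)) :
    p ∈ barbilianQuadrantK ↔ (p 1 = 0 ∧ 0 < p 0) ∨ (p 0 = 0 ∧ 0 < p 1) := Iff.rfl

lemma bqJ_mem_iff (p : EuclideanSpace ℝ (Fin 2)) :
    p ∈ barbilianQuadrantJ ↔ 0 < p 0 ∧ 0 < p 1 := Iff.rfl

lemma bqK_sub_Kbar' : barbilianQuadrantK ⊆ bqKbar := bqK_sub_Kbar

lemma bq_zero_mem_Kbar : (0 : EuclideanSpace ℝ (Fin 2)) ∈ bqKbar :=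
  Or.inl ⟨rfl, le_refl 0⟩

set_option maxHeartbeats 1600000 in
open Real Metric Set in
lemma bq_attains_max {A B : EuclideanSpace ℝ (Fin 2)}
    (hA : A ∈ barbilianQuadrantJ) (hB : B ∈ barbilianQuadrantJ) :
    ∃ M ∈ barbilianQuadrantK, ∀ N ∈ barbilianQuadrantK,
      dist N A / dist N B ≤ dist M A / dist M B := by
  have hA' : 0 < A 0 ∧ 0 < A 1 := hA
  have hB' : 0 < B 0 ∧ 0 < B 1 := hB
  by_cases hAB : A = B
  · subst hAB
    refine ⟨bqPt 1 0, Or.inl ⟨bqPt_app1 1 0, by rw [bqPt_app0]; norm_num⟩, ?_⟩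
    intro N hN
    rw [div_self (ne_of_gt (bq_dist_pos (bqK_sub_Kbar' hN) hA')),
      div_self (ne_of_gt (bq_dist_pos (bqK_sub_Kbar' (Or.inl ⟨bqPt_app1 1 0,
        by rw [bqPt_app0]; norm_num⟩)) hA'))]
  · obtain ⟨M₁, hM₁K, hM₁⟩ := bq_exists_gt hA' hB' hAB
    have hM₁bar : M₁ ∈ bqKbar := bqK_sub_Kbar hM₁K
    have hdM₁B : 0 < dist M₁ B := bq_dist_pos hM₁bar hB'
    have hg1 : 1 < dist M₁ A / dist M₁ B := (one_lt_div hdM₁B).2 hM₁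
    obtain ⟨ε, hε⟩ : ∃ x : ℝ, x = dist M₁ A / dist M₁ B - 1 := ⟨_, rfl⟩
    have hεpos : 0 < ε := by rw [hε]; linarith
    obtain ⟨R, hR⟩ : ∃ x : ℝ, x = dist (0 : EuclideanSpace ℝ (Fin 2)) B + dist A B / ε + 1
        + dist M₁ (0 : EuclideanSpace ℝ (Fin 2)) := ⟨_, rfl⟩
    have hRpos : 0 < R := by
      rw [hR]
      have h1 := dist_nonneg (x := (0 : EuclideanSpace ℝ (Fin 2))) (y := B)
      have h2 := div_nonneg (dist_nonneg (x := A) (y := B)) hεpos.le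
      have h3 := dist_nonneg (x := M₁) (y := (0 : EuclideanSpace ℝ (Fin 2)))
      linarith
    have hM₁ball : M₁ ∈ closedBall (0 : EuclideanSpace ℝ (Fin 2)) R := by
      rw [mem_closedBall, hR]
      have h1 := dist_nonneg (x := (0 : EuclideanSpace ℝ (Fin 2))) (y := B)
      have h2 := div_nonneg (dist_nonneg (x := A) (y := B)) hεpos.le
      linarith
    -- far away points have small ratio
    have hfar : ∀ N ∈ barbilianQuadrantK, R < dist N (0 : EuclideanSpace ℝ (Fin 2)) →
        dist N A / dist N B < dist M₁ A / dist M₁ B := by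
      intro N hN hNfar
      have hNbar : N ∈ bqKbar := bqK_sub_Kbar hN
      have hdNB : 0 < dist N B := bq_dist_pos hNbar hB'
      have h1 : dist N A ≤ dist N B + dist A B := by
        calc dist N A ≤ dist N B + dist B A := dist_triangle N B A
          _ = dist N B + dist A B := by rw [dist_comm B A]
      have h2 : dist A B / ε + 1 < dist N B := by
        have ht := dist_triangle N B (0 : EuclideanSpace ℝ (Fin 2))
        have hcm : dist B (0 : EuclideanSpace ℝ (Fin 2))
            = dist (0 : EuclideanSpace ℝ (Fin 2)) B := dist_comm _ _
        have h3 := dist_nonneg (x := M₁) (y := (0 : EuclideanSpace ℝ (Fin 2)))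
        rw [hR] at hNfar
        linarith
      have hdABlt : dist A B < ε * dist N B := by
        have hm := mul_lt_mul_of_pos_left h2 hεpos
        have hc : ε * (dist A B / ε) = dist A B := mul_div_cancel₀ _ (ne_of_gt hεpos)
        nlinarith [hm, hc]
      have hM1eq : dist M₁ A = (1 + ε) * dist M₁ B := by
        rw [hε]; field_simp; ring
      rw [div_lt_div_iff₀ hdNB hdM₁B]
      nlinarith [mul_lt_mul_of_pos_right hdABlt hdM₁B, mul_le_mul_of_nonneg_right h1 hdM₁B.le,
        mul_pos hdNB hdM₁B]
    -- compactness
    have hCclosed : IsClosed (bqKbar ∩ closedBall (0 : EuclideanSpace ℝ (Fin 2)) R) :=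
      bqKbar_closed.inter Metric.isClosed_closedBall
    have hCcpt : IsCompact (bqKbar ∩ closedBall (0 : EuclideanSpace ℝ (Fin 2)) R) :=
      (isCompact_closedBall _ _).of_isClosed_subset hCclosed Set.inter_subset_right
    have hCne : (bqKbar ∩ closedBall (0 : EuclideanSpace ℝ (Fin 2)) R).Nonempty :=
      ⟨M₁, hM₁bar, hM₁ball⟩
    have hcont : ContinuousOn (fun M => dist M A / dist M B)
        (bqKbar ∩ closedBall (0 : EuclideanSpace ℝ (Fin 2)) R) :=
      ContinuousOn.div (continuous_id.dist continuous_const).continuousOn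
        (continuous_id.dist continuous_const).continuousOn
        (fun M hM => (bq_dist_pos hM.1 hB').ne')
    obtain ⟨Mx, hMxC, hMxmax⟩ := hCcpt.exists_isMaxOn hCne hcont
    have hMxval : dist M₁ A / dist M₁ B ≤ dist Mx A / dist Mx B := hMxmax ⟨hM₁bar, hM₁ball⟩
    by_cases hMxK : Mx ∈ barbilianQuadrantK
    · refine ⟨Mx, hMxK, ?_⟩
      intro N hN
      by_cases hNR : dist N (0 : EuclideanSpace ℝ (Fin 2)) ≤ R
      · exact hMxmax ⟨bqK_sub_Kbar hN, mem_closedBall.2 hNR⟩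
      · exact le_trans (hfar N hN (not_le.1 hNR)).le hMxval
    · exfalso
      have hMx0 : Mx = 0 := by
        rcases hMxC.1 with ⟨h1, h2⟩ | ⟨h1, h2⟩
        · have h0 : Mx 0 = 0 := by
            by_contra hc
            exact hMxK (Or.inl ⟨h1, lt_of_le_of_ne h2 (Ne.symm hc)⟩)
          rw [bq_eq_pt Mx, h0, h1, ← bqPt_zero]
        · have h0 : Mx 1 = 0 := by
            by_contra hc
            exact hMxK (Or.inr ⟨h1, lt_of_le_of_ne h2 (Ne.symm hc)⟩)
          rw [bq_eq_pt Mx, h0, h1, ← bqPt_zero]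
      have hdB0 : 0 < dist (0 : EuclideanSpace ℝ (Fin 2)) B :=
        bq_dist_pos bq_zero_mem_Kbar hB'
      have hdlt : dist (0 : EuclideanSpace ℝ (Fin 2)) B
          < dist (0 : EuclideanSpace ℝ (Fin 2)) A := by
        have h0 : 1 < dist Mx A / dist Mx B := lt_of_lt_of_le hg1 hMxval
        rw [hMx0] at h0
        exact (one_lt_div hdB0).1 h0
      obtain ⟨M2, hM2K, hM2ball, hM2gt⟩ := bq_escape hA' hB' hRpos hdlt
      have hle : dist M2 A / dist M2 B ≤ dist Mx A / dist Mx B :=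
        hMxmax ⟨bqK_sub_Kbar hM2K, mem_closedBall.2 hM2ball⟩
      rw [hMx0] at hle
      linarith
open Metric Set in
lemma bq_attains_min {A B : EuclideanSpace ℝ (Fin 2)}
    (hA : A ∈ barbilianQuadrantJ) (hB : B ∈ barbilianQuadrantJ) :
    ∃ M ∈ barbilianQuadrantK, ∀ N ∈ barbilianQuadrantK,
      dist M A / dist M B ≤ dist N A / dist N B := by
  have hA' : 0 < A 0 ∧ 0 < A 1 := hA
  have hB' : 0 < B 0 ∧ 0 < B 1 := hB
  obtain ⟨M, hM, hmax⟩ := bq_attains_max hB hA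
  refine ⟨M, hM, fun N hN => ?_⟩
  have h := hmax N hN
  have hMA := bq_dist_pos (bqK_sub_Kbar' hM) hA'
  have hMB := bq_dist_pos (bqK_sub_Kbar' hM) hB'
  have hNA := bq_dist_pos (bqK_sub_Kbar' hN) hA'
  have hNB := bq_dist_pos (bqK_sub_Kbar' hN) hB'
  rw [div_le_div_iff₀ hNA hMA] at h
  rw [div_le_div_iff₀ hMB hNB]
  nlinarith [h]

open Metric Set in
/-- the maximiser of `g_{AB}` is simultaneously the minimiser of `g_{BA}` -/
lemma bq_spec {A B : EuclideanSpace ℝ (Fin 2)}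
    (hA : A ∈ barbilianQuadrantJ) (hB : B ∈ barbilianQuadrantJ) :
    ∃ M ∈ barbilianQuadrantK,
      IsGreatest ((fun M => dist M A / dist M B) '' barbilianQuadrantK)
        (dist M A / dist M B) ∧
      IsLeast ((fun M => dist M B / dist M A) '' barbilianQuadrantK)
        (dist M B / dist M A) := by
  have hA' : 0 < A 0 ∧ 0 < A 1 := hA
  have hB' : 0 < B 0 ∧ 0 < B 1 := hB
  obtain ⟨M, hM, hmax⟩ := bq_attains_max hA hB
  refine ⟨M, hM, ⟨Set.mem_image_of_mem _ hM, ?_⟩, ⟨Set.mem_image_of_mem _ hM, ?_⟩⟩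
  · rintro y ⟨N, hN, rfl⟩
    exact hmax N hN
  · rintro y ⟨N, hN, rfl⟩
    have h := hmax N hN
    have hMA := bq_dist_pos (bqK_sub_Kbar' hM) hA'
    have hMB := bq_dist_pos (bqK_sub_Kbar' hM) hB'
    have hNA := bq_dist_pos (bqK_sub_Kbar' hN) hA'
    have hNB := bq_dist_pos (bqK_sub_Kbar' hN) hB'
    show dist M B / dist M A ≤ dist N B / dist N A
    rw [div_le_div_iff₀ hNB hMB] at h
    rw [div_le_div_iff₀ hMA hNA]
    nlinarith [h]

set_option maxHeartbeats 1600000 in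
open Real Metric Set in
/-- On the open first quadrant `J` with `K` the union of the positive half-axes and
influence `f(M,A) = ‖MA‖`, each ratio `g_{AB}(M) = ‖MA‖/‖MB‖` attains a maximum and a
minimum on `K`; consequently `d^B(A,B) = log(max g_{AB} / min g_{AB})` is a distance
on `J`. -/
theorem barbilian_quadrant_distance :
    (∀ A ∈ barbilianQuadrantJ, ∀ B ∈ barbilianQuadrantJ,
      (∃ M ∈ barbilianQuadrantK, ∀ N ∈ barbilianQuadrantK,
        dist N A / dist N B ≤ dist M A / dist M B) ∧
      (∃ M ∈ barbilianQuadrantK, ∀ N ∈ barbilianQuadrantK,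
        dist M A / dist M B ≤ dist N A / dist N B)) ∧
    (∀ A ∈ barbilianQuadrantJ, ∀ B ∈ barbilianQuadrantJ,
      barbilianQuadrantD A B = barbilianQuadrantD B A) ∧
    (∀ A ∈ barbilianQuadrantJ, ∀ B ∈ barbilianQuadrantJ,
      (barbilianQuadrantD A B = 0 ↔ A = B)) ∧
    (∀ A ∈ barbilianQuadrantJ, ∀ B ∈ barbilianQuadrantJ, ∀ C ∈ barbilianQuadrantJ,
      barbilianQuadrantD A C ≤ barbilianQuadrantD A B + barbilianQuadrantD B C) := by
  refine ⟨fun A hA B hB => ⟨bq_attains_max hA hB, bq_attains_min hA hB⟩, ?_, ?_, ?_⟩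
  · -- symmetry
    intro A hA B hB
    have hA' : 0 < A 0 ∧ 0 < A 1 := hA
    have hB' : 0 < B 0 ∧ 0 < B 1 := hB
    obtain ⟨M, hM, hG, hL⟩ := bq_spec hA hB
    obtain ⟨M', hM', hG', hL'⟩ := bq_spec hB hA
    unfold barbilianQuadrantD
    rw [hG.csSup_eq, hL'.csInf_eq, hG'.csSup_eq, hL.csInf_eq]
    have h1 := bq_dist_pos (bqK_sub_Kbar' hM) hA'
    have h2 := bq_dist_pos (bqK_sub_Kbar' hM) hB'
    have h3 := bq_dist_pos (bqK_sub_Kbar' hM') hA'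
    have h4 := bq_dist_pos (bqK_sub_Kbar' hM') hB'
    congr 1
    field_simp
  · -- zero iff equal
    intro A hA B hB
    have hA' : 0 < A 0 ∧ 0 < A 1 := hA
    have hB' : 0 < B 0 ∧ 0 < B 1 := hB
    constructor
    · intro h
      by_contra hne
      apply absurd h
      obtain ⟨M, hM, hG, _⟩ := bq_spec hA hB
      obtain ⟨M', hM', _, hL⟩ := bq_spec hB hA
      obtain ⟨P, hP, hPg⟩ := bq_exists_gt hA' hB' hne
      obtain ⟨Q, hQ, hQg⟩ := bq_exists_gt hB' hA' (Ne.symm hne)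
      unfold barbilianQuadrantD
      rw [hG.csSup_eq, hL.csInf_eq]
      have hSge : dist P A / dist P B ≤ dist M A / dist M B :=
        hG.2 (Set.mem_image_of_mem _ hP)
      have hIle : dist Q A / dist Q B ≤ dist Q A / dist Q B := le_refl _
      have hIle' : dist M' A / dist M' B ≤ dist Q A / dist Q B :=
        hL.2 (Set.mem_image_of_mem _ hQ)
      have hPB := bq_dist_pos (bqK_sub_Kbar' hP) hB'
      have hQB := bq_dist_pos (bqK_sub_Kbar' hQ) hB'
      have hQA := bq_dist_pos (bqK_sub_Kbar' hQ) hA'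
      have hM'A := bq_dist_pos (bqK_sub_Kbar' hM') hA'
      have hM'B := bq_dist_pos (bqK_sub_Kbar' hM') hB'
      have hP1 : 1 < dist P A / dist P B := (one_lt_div hPB).2 hPg
      have hQ1 : dist Q A / dist Q B < 1 := (div_lt_one hQB).2 hQg
      have hIpos : 0 < dist M' A / dist M' B := div_pos hM'A hM'B
      have hgt : 1 < (dist M A / dist M B) / (dist M' A / dist M' B) :=
        (one_lt_div hIpos).2 (by linarith)
      exact ne_of_gt (Real.log_pos hgt)
    · rintro rfl
      unfold barbilianQuadrantD
      have himg : (fun M => dist M A / dist M A) '' barbilianQuadrantK = {1} := by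
        rw [Set.eq_singleton_iff_nonempty_unique_mem]
        constructor
        · exact ⟨_, Set.mem_image_of_mem _
            (Or.inl ⟨bqPt_app1 1 0, by rw [bqPt_app0]; norm_num⟩ :
              bqPt 1 0 ∈ barbilianQuadrantK)⟩
        · rintro x ⟨N, hN, rfl⟩
          exact div_self (bq_dist_pos (bqK_sub_Kbar' hN) hA').ne'
      rw [himg, csSup_singleton, csInf_singleton]
      norm_num
  · -- triangle inequality
    intro A hA B hB C hC
    have hA' : 0 < A 0 ∧ 0 < A 1 := hA
    have hB' : 0 < B 0 ∧ 0 < B 1 := hB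
    have hC' : 0 < C 0 ∧ 0 < C 1 := hC
    obtain ⟨M1, hM1, hGac, _⟩ := bq_spec hA hC
    obtain ⟨M2, hM2, _, hLac⟩ := bq_spec hC hA
    obtain ⟨M3, hM3, hGab, _⟩ := bq_spec hA hB
    obtain ⟨M4, hM4, _, hLab⟩ := bq_spec hB hA
    obtain ⟨M5, hM5, hGbc, _⟩ := bq_spec hB hC
    obtain ⟨M6, hM6, _, hLbc⟩ := bq_spec hC hB
    unfold barbilianQuadrantD
    rw [hGac.csSup_eq, hLac.csInf_eq, hGab.csSup_eq, hLab.csInf_eq,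
      hGbc.csSup_eq, hLbc.csInf_eq]
    have p1A := bq_dist_pos (bqK_sub_Kbar' hM1) hA'
    have p1B := bq_dist_pos (bqK_sub_Kbar' hM1) hB'
    have p1C := bq_dist_pos (bqK_sub_Kbar' hM1) hC'
    have p2A := bq_dist_pos (bqK_sub_Kbar' hM2) hA'
    have p2B := bq_dist_pos (bqK_sub_Kbar' hM2) hB'
    have p2C := bq_dist_pos (bqK_sub_Kbar' hM2) hC'
    have p3A := bq_dist_pos (bqK_sub_Kbar' hM3) hA'
    have p3B := bq_dist_pos (bqK_sub_Kbar' hM3) hB'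
    have p4A := bq_dist_pos (bqK_sub_Kbar' hM4) hA'
    have p4B := bq_dist_pos (bqK_sub_Kbar' hM4) hB'
    have p5B := bq_dist_pos (bqK_sub_Kbar' hM5) hB'
    have p5C := bq_dist_pos (bqK_sub_Kbar' hM5) hC'
    have p6B := bq_dist_pos (bqK_sub_Kbar' hM6) hB'
    have p6C := bq_dist_pos (bqK_sub_Kbar' hM6) hC'
    -- decompositions and bounds
    have hd1 : dist M1 A / dist M1 C = (dist M1 A / dist M1 B) * (dist M1 B / dist M1 C) :=
      (div_mul_div_cancel₀ p1B.ne').symm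
    have hd2 : dist M2 A / dist M2 C = (dist M2 A / dist M2 B) * (dist M2 B / dist M2 C) :=
      (div_mul_div_cancel₀ p2B.ne').symm
    have h1 : dist M1 A / dist M1 B ≤ dist M3 A / dist M3 B :=
      hGab.2 (Set.mem_image_of_mem _ hM1)
    have h2 : dist M1 B / dist M1 C ≤ dist M5 B / dist M5 C :=
      hGbc.2 (Set.mem_image_of_mem _ hM1)
    have h3 : dist M4 A / dist M4 B ≤ dist M2 A / dist M2 B :=
      hLab.2 (Set.mem_image_of_mem _ hM2)
    have h4 : dist M6 B / dist M6 C ≤ dist M2 B / dist M2 C :=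
      hLbc.2 (Set.mem_image_of_mem _ hM2)
    have hS : dist M1 A / dist M1 C ≤ (dist M3 A / dist M3 B) * (dist M5 B / dist M5 C) := by
      rw [hd1]
      exact mul_le_mul h1 h2 (div_nonneg dist_nonneg dist_nonneg)
        (div_nonneg dist_nonneg dist_nonneg)
    have hI : (dist M4 A / dist M4 B) * (dist M6 B / dist M6 C) ≤ dist M2 A / dist M2 C := by
      rw [hd2]
      exact mul_le_mul h3 h4 (div_nonneg dist_nonneg dist_nonneg)
        (div_nonneg dist_nonneg dist_nonneg)
    have hIpos : 0 < (dist M4 A / dist M4 B) * (dist M6 B / dist M6 C) :=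
      mul_pos (div_pos p4A p4B) (div_pos p6B p6C)
    have key : (dist M1 A / dist M1 C) / (dist M2 A / dist M2 C) ≤
        ((dist M3 A / dist M3 B) / (dist M4 A / dist M4 B)) *
          ((dist M5 B / dist M5 C) / (dist M6 B / dist M6 C)) := by
      rw [div_mul_div_comm]
      exact div_le_div₀ (by positivity) hS hIpos hI
    calc Real.log ((dist M1 A / dist M1 C) / (dist M2 A / dist M2 C))
        ≤ Real.log (((dist M3 A / dist M3 B) / (dist M4 A / dist M4 B)) *
            ((dist M5 B / dist M5 C) / (dist M6 B / dist M6 C))) :=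
          Real.log_le_log (div_pos (div_pos p1A p1C) (div_pos p2A p2C)) key
      _ = _ := Real.log_mul (by positivity) (by positivity)
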